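/- Let f satisfy Assumption A, let N ∈ ℕ with k = T/N satisfy ν k < 1/4, and let (U^n)_{n=0,…,N} ∈ G²_N be the grid function generated by the randomized backward Euler scheme U^0 = u₀, U^n = U^{n−1} + k f(ξ_n, U^n). Then for every grid function V = (V^n)_{n=0,…,N} ∈ G²_N and every n ∈ {1,…,N}: ‖U^n − V^n‖_{L²(Ω;ℝ^d)} ≤ e^{(2ν+1)t_n} · ( |U^0 − V^0|² + Σ_{j=1}^{n} ( 2 ‖ρ_N^j(V)‖²_{L²(Ω;ℝ^d)} + (2/k) ‖E[ρ_N^j(V) | F_{j−1}]‖²_{L²(Ω;ℝ^d)} ) )^{1/2}. -/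

import Mathlib

open MeasureTheory RealInnerProductSpace

/-- Membership in the class `G²_N` of square-integrable adapted grid functions:
`Z 0` is deterministic and, for `n ∈ {1,…,N}`, both `Z n` and `f(ξ n, Z n)` are
`𝓕 n`-measurable and square-integrable. -/
def InG2 {d : ℕ} {Ω : Type} [MeasurableSpace Ω] (P : Measure Ω)
    (N : ℕ) (𝓕 : ℕ → MeasurableSpace Ω) (ξ : ℕ → Ω → ℝ)
    (f : ℝ → EuclideanSpace ℝ (Fin d) → EuclideanSpace ℝ (Fin d))
    (Z : ℕ → Ω → EuclideanSpace ℝ (Fin d)) : Prop :=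
  (∃ z₀ : EuclideanSpace ℝ (Fin d), ∀ ω, Z 0 ω = z₀) ∧
  ∀ n, 1 ≤ n → n ≤ N →
    Measurable[𝓕 n] (Z n) ∧ MemLp (Z n) 2 P ∧
    Measurable[𝓕 n] (fun ω => f (ξ n ω) (Z n ω)) ∧
    MemLp (fun ω => f (ξ n ω) (Z n ω)) 2 P

/-- The local residual `ρ_N^n(V) = k f(ξ_n, V^n) − V^n + V^{n−1}`. -/
noncomputable def rbeResidual {d : ℕ} {Ω : Type} (k : ℝ) (ξ : ℕ → Ω → ℝ)
    (f : ℝ → EuclideanSpace ℝ (Fin d) → EuclideanSpace ℝ (Fin d))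
    (V : ℕ → Ω → EuclideanSpace ℝ (Fin d)) (n : ℕ) : Ω → EuclideanSpace ℝ (Fin d) :=
  fun ω => k • f (ξ n ω) (V n ω) - V n ω + V (n - 1) ω



section AuxLemmas

variable {α : Type*} {m m0 : MeasurableSpace α} {μ : Measure α} {d : ℕ}

local notation "E" => EuclideanSpace ℝ (Fin d)

lemma memLp2_integrable_inner {f g : α → E} (hf : MemLp f 2 μ) (hg : MemLp g 2 μ) :
    Integrable (fun ω => ⟪f ω, g ω⟫) μ := by
  have h := L2.integrable_inner (𝕜 := ℝ) (hf.toLp f) (hg.toLp g)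
  apply h.congr
  filter_upwards [hf.coeFn_toLp, hg.coeFn_toLp] with ω h1 h2
  rw [h1, h2]

lemma condexp_aux (hm : m ≤ m0) [IsProbabilityMeasure μ] {ρ : α → E}
    (hρ : MemLp ρ 2 μ) :
    MemLp (μ[ρ|m]) 2 μ ∧
      ∀ W : α → E, AEStronglyMeasurable[m] W μ → MemLp W 2 μ →
        ∫ ω, ⟪ρ ω, W ω⟫ ∂μ = ∫ ω, ⟪(μ[ρ|m]) ω, W ω⟫ ∂μ := by
  haveI : SigmaFinite (μ.trim hm) := by infer_instance
  set F : Lp E 2 μ := hρ.toLp ρ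
  have hcond : ((condExpL2 E ℝ hm F : Lp E 2 μ) : α → E) =ᵐ[μ] μ[ρ|m] := by
    refine ae_eq_condExp_of_forall_setIntegral_eq hm (hρ.integrable one_le_two) ?_ ?_ ?_
    · intro s _ hμs
      exact integrableOn_condExpL2_of_measure_ne_top hm hμs.ne F
    · intro s hs hμs
      rw [integral_condExpL2_eq hm F hs hμs.ne]
      exact setIntegral_congr_ae (hm s hs) (hρ.coeFn_toLp.mono fun x hx _ => hx)
    · exact aestronglyMeasurable_condExpL2 hm F
  constructor
  · exact (Lp.memLp _).ae_eq hcond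
  · intro W hWm hW
    set G : Lp E 2 μ := hW.toLp W
    have hG : AEStronglyMeasurable[m] (G : α → E) μ :=
      AEStronglyMeasurable.congr hWm hW.coeFn_toLp.symm
    have h1 := inner_condExpL2_eq_inner_fun (𝕜 := ℝ) hm F G hG
    rw [L2.inner_def, L2.inner_def] at h1
    calc ∫ ω, ⟪ρ ω, W ω⟫ ∂μ = ∫ ω, ⟪(F : α → E) ω, (G : α → E) ω⟫ ∂μ := by
          refine integral_congr_ae ?_
          filter_upwards [hρ.coeFn_toLp, hW.coeFn_toLp] with ω h1 h2
          rw [h1, h2]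
      _ = ∫ ω, ⟪((condExpL2 E ℝ hm F : Lp E 2 μ) : α → E) ω, (G : α → E) ω⟫ ∂μ := h1.symm
      _ = ∫ ω, ⟪(μ[ρ|m]) ω, W ω⟫ ∂μ := by
          refine integral_congr_ae ?_
          filter_upwards [hcond, hW.coeFn_toLp] with ω h1 h2
          rw [h1, h2]

/-- a.e., the randomized node `a + k τ(ω)` lies in `[0,T] \ Nf`. -/
lemma xi_mem_ae {Ω : Type} [mΩ : MeasurableSpace Ω] (P : Measure Ω) [IsProbabilityMeasure P]
    {τ : Ω → ℝ} (hmeas : Measurable τ)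
    (hmap : Measure.map τ P = volume.restrict (Set.Icc (0:ℝ) 1))
    {a k T : ℝ} (hk : 0 < k) (ha : 0 ≤ a) (haT : a + k ≤ T)
    {Nf : Set ℝ} (hNf : volume Nf = 0) :
    ∀ᵐ ω ∂P, (a + k * τ ω) ∈ Set.Icc (0:ℝ) T \ Nf := by
  obtain ⟨S, hNS, hSm, hS0⟩ := exists_measurable_superset_of_null hNf
  have hφ : Measurable (fun t : ℝ => a + k * t) :=
    (measurable_id.const_mul k).const_add a
  have hA : MeasurableSet ((fun t : ℝ => a + k * t) ⁻¹' S) := hφ hSm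
  have hvolA : volume ((fun t : ℝ => a + k * t) ⁻¹' S) = 0 := by
    have h1 : (fun t : ℝ => a + k * t) ⁻¹' S = (fun t : ℝ => k * t) ⁻¹' ((fun u : ℝ => a + u) ⁻¹' S) := rfl
    rw [h1, Real.volume_preimage_mul_left (ne_of_gt hk),
      measure_preimage_add volume a S, hS0, mul_zero]
  have h2 : P (τ ⁻¹' ((fun t : ℝ => a + k * t) ⁻¹' S)) = 0 := by
    rw [← Measure.map_apply hmeas hA, hmap]
    refine le_antisymm (le_trans (Measure.restrict_apply_le _ _) hvolA.le) zero_le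
  have hae2 : ∀ᵐ ω ∂P, a + k * τ ω ∉ S := by
    rw [ae_iff]
    convert h2 using 2
    ext ω; simp
  have hae1 : ∀ᵐ ω ∂P, τ ω ∈ Set.Icc (0:ℝ) 1 := by
    rw [ae_iff]
    have h3 : {ω | ¬ τ ω ∈ Set.Icc (0:ℝ) 1} = τ ⁻¹' (Set.Icc (0:ℝ) 1)ᶜ := rfl
    rw [h3, ← Measure.map_apply hmeas measurableSet_Icc.compl, hmap,
      Measure.restrict_apply measurableSet_Icc.compl]
    simp
  filter_upwards [hae1, hae2] with ω h1 h2
  constructor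
  · constructor
    · nlinarith [h1.1, h1.2]
    · nlinarith [h1.1, h1.2]
  · exact fun hmem => h2 (hNS hmem)

end AuxLemmas

set_option maxHeartbeats 1000000 in
/-- Stability of the randomized backward Euler method: if
`νk < 1/4` and `U` is generated by the scheme, then for every `V ∈ G²_N` and
every `n ∈ {1,…,N}`,
`‖Uⁿ−Vⁿ‖_{L²} ≤ e^{(2ν+1)tₙ} (|U⁰−V⁰|² + Σⱼ(2‖ρⱼ‖² + (2/k)‖E[ρⱼ|F_{j−1}]‖²))^{1/2}`. -/
theorem stmt6
    (T : ℝ) (hT : 0 < T) (d : ℕ) (u₀ : EuclideanSpace ℝ (Fin d))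
    (f : ℝ → EuclideanSpace ℝ (Fin d) → EuclideanSpace ℝ (Fin d))
    (hf_meas : Measurable (Function.uncurry f))
    (Nf : Set ℝ) (hNf_null : volume Nf = 0)
    (ν : ℝ) (hν : 0 ≤ ν)
    (hf_onesided : ∀ t ∈ Set.Icc (0:ℝ) T \ Nf, ∀ x y : EuclideanSpace ℝ (Fin d),
      ⟪f t x - f t y, x - y⟫ ≤ ν * ‖x - y‖ ^ 2)
    (g : ℝ → ℝ) (hg_meas : Measurable g) (hg_nonneg : ∀ t, 0 ≤ g t)
    (hg_L2 : MemLp g 2 (volume.restrict (Set.Icc (0:ℝ) T)))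
    (hf_bound : ∀ t ∈ Set.Icc (0:ℝ) T \ Nf, ‖f t 0‖ ≤ g t)
    (hf_lip : ∀ K : Set (EuclideanSpace ℝ (Fin d)), IsCompact K →
      ∃ LK : ℝ → ℝ, Measurable LK ∧ (∀ t, 0 ≤ LK t) ∧
        MemLp LK 2 (volume.restrict (Set.Icc (0:ℝ) T)) ∧
        ∀ t ∈ Set.Icc (0:ℝ) T \ Nf, ∀ x ∈ K, ∀ y ∈ K,
          ‖f t x - f t y‖ ≤ LK t * ‖x - y‖)
    -- the randomized temporal setting
    (N : ℕ) (hN : 0 < N) (k : ℝ) (hk : k = T / N) (hkν : ν * k < 1 / 4)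
    (Ω : Type) [mΩ : MeasurableSpace Ω] (P : Measure Ω) [IsProbabilityMeasure P]
    (hP_complete : ∀ s : Set Ω, P s = 0 → MeasurableSet s)
    (τ : ℕ → Ω → ℝ) (hτ_meas : ∀ n, Measurable (τ n))
    (hτ_indep : ProbabilityTheory.iIndepFun
      (m := fun _ : Fin N => (inferInstance : MeasurableSpace ℝ))
      (fun i : Fin N => τ (i + 1)) P)
    (hτ_unif : ∀ n, 1 ≤ n → n ≤ N →
      Measure.map (τ n) P = volume.restrict (Set.Icc (0:ℝ) 1))
    (ξ : ℕ → Ω → ℝ) (hξ : ∀ n ω, ξ n ω = ((n : ℝ) - 1) * k + k * τ n ω)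
    (𝓕 : ℕ → MeasurableSpace Ω)
    (h𝓕 : ∀ n, 𝓕 n = MeasurableSpace.generateFrom {s : Set Ω | P s = 0} ⊔
      ⨆ j ∈ Finset.Icc 1 n, MeasurableSpace.comap (τ j)
        (inferInstance : MeasurableSpace ℝ))
    (h𝓕le : ∀ n, 𝓕 n ≤ mΩ)
    -- the numerical solution generated by the randomized backward Euler scheme
    (U : ℕ → Ω → EuclideanSpace ℝ (Fin d))
    (hU0 : ∀ ω, U 0 ω = u₀)
    (hU : ∀ n, 1 ≤ n → n ≤ N →
      Measurable[𝓕 n] (U n) ∧ MemLp (U n) 2 P ∧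
      Measurable[𝓕 n] (fun ω => f (ξ n ω) (U n ω)) ∧
      MemLp (fun ω => f (ξ n ω) (U n ω)) 2 P ∧
      (∀ᵐ ω ∂P, U n ω = U (n - 1) ω + k • f (ξ n ω) (U n ω))) :
    ∀ V : ℕ → Ω → EuclideanSpace ℝ (Fin d), InG2 P N 𝓕 ξ f V →
      ∀ n, 1 ≤ n → n ≤ N →
        Real.sqrt (∫ ω, ‖U n ω - V n ω‖ ^ 2 ∂P) ≤
          Real.exp ((2 * ν + 1) * (n * k)) *
            Real.sqrt ((∫ ω, ‖U 0 ω - V 0 ω‖ ^ 2 ∂P) +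
              ∑ j ∈ Finset.Icc 1 n,
                ((2 * ∫ ω, ‖rbeResidual k ξ f V j ω‖ ^ 2 ∂P) +
                  (2 / k) * ∫ ω, ‖(P[rbeResidual k ξ f V j|𝓕 (j - 1)]) ω‖ ^ 2 ∂P)) := by
  intro V hV n hn1 hnN
  obtain ⟨v₀, hV0⟩ := hV.1
  have hk0 : 0 < k := by rw [hk]; positivity
  set c : ℝ := Real.exp ((4 * ν + 2) * k) with hc_def
  have hc1 : (1:ℝ) ≤ c := Real.one_le_exp (by positivity)
  have hc0 : (0:ℝ) < c := Real.exp_pos _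
  -- abbreviations
  set a : ℕ → ℝ := fun j => ∫ ω, ‖U j ω - V j ω‖ ^ 2 ∂P with ha_def
  set r : ℕ → ℝ := fun j => ∫ ω, ‖rbeResidual k ξ f V j ω‖ ^ 2 ∂P with hr_def
  set s : ℕ → ℝ := fun j => ∫ ω, ‖(P[rbeResidual k ξ f V j|𝓕 (j - 1)]) ω‖ ^ 2 ∂P with hs_def
  have ha_nonneg : ∀ j, 0 ≤ a j := fun j => integral_nonneg (fun ω => by positivity)
  have hr_nonneg : ∀ j, 0 ≤ r j := fun j => integral_nonneg (fun ω => by positivity)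
  have hs_nonneg : ∀ j, 0 ≤ s j := fun j => integral_nonneg (fun ω => by positivity)
  -- MemLp of U j and V j for all j ≤ N
  have hUmem : ∀ j, j ≤ N → MemLp (U j) 2 P := by
    intro j hj
    rcases Nat.eq_zero_or_pos j with rfl | h1
    · exact (memLp_const u₀).ae_eq (Filter.Eventually.of_forall fun ω => (hU0 ω).symm)
    · exact (hU j h1 hj).2.1
  have hVmem : ∀ j, j ≤ N → MemLp (V j) 2 P := by
    intro j hj
    rcases Nat.eq_zero_or_pos j with rfl | h1
    · exact (memLp_const v₀).ae_eq (Filter.Eventually.of_forall fun ω => (hV0 ω).symm)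
    · exact (hV.2 j h1 hj).2.1
  have hEmem : ∀ j, j ≤ N → MemLp (fun ω => U j ω - V j ω) 2 P := fun j hj =>
    (hUmem j hj).sub (hVmem j hj)
  -- strong measurability of the error w.r.t. 𝓕 j
  have hEmeas : ∀ j, j ≤ N →
      AEStronglyMeasurable[𝓕 j] (fun ω => U j ω - V j ω) P := by
    intro j hj
    rcases Nat.eq_zero_or_pos j with rfl | h1
    · refine AEStronglyMeasurable.congr
        ((stronglyMeasurable_const (b := u₀ - v₀)).aestronglyMeasurable) ?_
      exact Filter.Eventually.of_forall fun ω => by show u₀ - v₀ = U 0 ω - V 0 ω; rw [hU0, hV0]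
    · exact (((hU j h1 hj).1.stronglyMeasurable.sub
        ((hV.2 j h1 hj).1.stronglyMeasurable)).aestronglyMeasurable)
  -- the one-step estimate
  have step : ∀ m, 1 ≤ m → m ≤ N → a m ≤ c * a (m - 1) + (2 * r m + 2 / k * s m) := by
    intro m hm1 hmN
    have hm1N : m - 1 ≤ N := le_trans (Nat.sub_le m 1) hmN
    obtain ⟨hUmeas, hUp, hfUmeas, hfUp, hUrec⟩ := hU m hm1 hmN
    obtain ⟨hVmeas, hVp, hfVmeas, hfVp⟩ := hV.2 m hm1 hmN
    set ρ : Ω → EuclideanSpace ℝ (Fin d) := rbeResidual k ξ f V m with hρ_def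
    set W : Ω → EuclideanSpace ℝ (Fin d) := fun ω => U (m-1) ω - V (m-1) ω with hW_def
    set Em : Ω → EuclideanSpace ℝ (Fin d) := fun ω => U m ω - V m ω with hEm_def
    have hρp : MemLp ρ 2 P := ((hfVp.const_smul k).sub hVp).add (hVmem (m-1) hm1N)
    have hWp : MemLp W 2 P := hEmem (m-1) hm1N
    have hEp : MemLp Em 2 P := hEmem m hmN
    obtain ⟨hcρp, hinner_eq⟩ := condexp_aux (h𝓕le (m-1)) hρp
    have hinner := hinner_eq W (hEmeas (m-1) hm1N) hWp
    -- integrability facts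
    have iE : Integrable (fun ω => ‖Em ω‖ ^ 2) P :=
      (memLp_two_iff_integrable_sq_norm hEp.1).mp hEp
    have iW : Integrable (fun ω => ‖W ω‖ ^ 2) P :=
      (memLp_two_iff_integrable_sq_norm hWp.1).mp hWp
    have iρ : Integrable (fun ω => ‖ρ ω‖ ^ 2) P :=
      (memLp_two_iff_integrable_sq_norm hρp.1).mp hρp
    have icρ : Integrable (fun ω => ‖(P[ρ|𝓕 (m-1)]) ω‖ ^ 2) P :=
      (memLp_two_iff_integrable_sq_norm hcρp.1).mp hcρp
    have iρW : Integrable (fun ω => ⟪ρ ω, W ω⟫) P := memLp2_integrable_inner hρp hWp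
    have icρW : Integrable (fun ω => ⟪(P[ρ|𝓕 (m-1)]) ω, W ω⟫) P :=
      memLp2_integrable_inner hcρp hWp
    -- a.e. membership of the random node
    have hξT : ∀ᵐ ω ∂P, ξ m ω ∈ Set.Icc (0:ℝ) T \ Nf := by
      have hmem := xi_mem_ae P (hτ_meas m) (hτ_unif m hm1 hmN)
        (a := ((m:ℝ) - 1) * k) (k := k) (T := T) hk0
        (by
          have : (1:ℝ) ≤ (m:ℝ) := by exact_mod_cast hm1
          nlinarith)
        (by
          have h1 : ((m:ℝ) - 1) * k + k = (m:ℝ) * k := by ring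
          have h2 : (m:ℝ) ≤ (N:ℝ) := by exact_mod_cast hmN
          have h3 : (N:ℝ) * k = T := by
            rw [hk]; field_simp
          nlinarith) hNf_null
      filter_upwards [hmem] with ω hω
      rw [hξ m ω]; exact hω
    -- pointwise (a.e.) energy inequality
    have hpt : ∀ᵐ ω ∂P, ‖Em ω‖ ^ 2 ≤
        (1/2) * ‖Em ω‖ ^ 2 + (1/2) * ‖W ω‖ ^ 2 + ν * k * ‖Em ω‖ ^ 2 +
          ⟪ρ ω, W ω⟫ + (1/2) * ‖ρ ω‖ ^ 2 := by
      filter_upwards [hUrec, hξT] with ω h1 h2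
      set Δ : EuclideanSpace ℝ (Fin d) := f (ξ m ω) (U m ω) - f (ξ m ω) (V m ω) with hΔ_def
      have hdecomp : Em ω = W ω + k • Δ + ρ ω := by
        show U m ω - V m ω = (U (m-1) ω - V (m-1) ω) + k • Δ + ρ ω
        rw [hρ_def, rbeResidual, hΔ_def]
        nth_rewrite 1 [h1]
        rw [smul_sub]
        abel
      have e0 : ‖Em ω‖ ^ 2 = ⟪W ω + k • Δ + ρ ω, Em ω⟫ := by
        rw [← real_inner_self_eq_norm_sq]
        rw [← hdecomp]
      have e1 : ‖Em ω‖ ^ 2 = ⟪W ω, Em ω⟫ + k * ⟪Δ, Em ω⟫ + ⟪ρ ω, Em ω⟫ := by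
        rw [e0, inner_add_left, inner_add_left, real_inner_smul_left]
      have hos : ⟪Δ, Em ω⟫ ≤ ν * ‖Em ω‖ ^ 2 := by
        have := hf_onesided (ξ m ω) h2 (U m ω) (V m ω)
        exact this
      have hos' : k * ⟪Δ, Em ω⟫ ≤ k * (ν * ‖Em ω‖ ^ 2) :=
        mul_le_mul_of_nonneg_left hos hk0.le
      have hWE : ⟪W ω, Em ω⟫ =
          (‖Em ω‖ ^ 2 + ‖W ω‖ ^ 2 - ‖Em ω - W ω‖ ^ 2) / 2 := by
        have := norm_sub_sq_real (Em ω) (W ω)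
        have hcomm := real_inner_comm (W ω) (Em ω)
        linarith
      have hcross : ⟪ρ ω, Em ω⟫ = ⟪ρ ω, W ω⟫ + ⟪ρ ω, Em ω - W ω⟫ := by
        have h7 : ⟪ρ ω, Em ω - W ω⟫ = ⟪ρ ω, Em ω⟫ - ⟪ρ ω, W ω⟫ :=
          inner_sub_right (ρ ω) (Em ω) (W ω)
        linarith
      have hcross2 : ⟪ρ ω, Em ω - W ω⟫ ≤
          (1/2) * ‖ρ ω‖ ^ 2 + (1/2) * ‖Em ω - W ω‖ ^ 2 := by
        have h4 := real_inner_le_norm (ρ ω) (Em ω - W ω)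
        nlinarith [sq_nonneg (‖ρ ω‖ - ‖Em ω - W ω‖)]
      linarith [e1, hos', hWE, hcross, hcross2]
    -- integrate
    have i1 : Integrable (fun ω => (1/2) * ‖Em ω‖ ^ 2) P := iE.const_mul _
    have i2 : Integrable (fun ω => (1/2) * ‖Em ω‖ ^ 2 + (1/2) * ‖W ω‖ ^ 2) P :=
      i1.add (iW.const_mul _)
    have i3 : Integrable (fun ω => (1/2) * ‖Em ω‖ ^ 2 + (1/2) * ‖W ω‖ ^ 2 +
        ν * k * ‖Em ω‖ ^ 2) P := i2.add (iE.const_mul _)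
    have i4 : Integrable (fun ω => (1/2) * ‖Em ω‖ ^ 2 + (1/2) * ‖W ω‖ ^ 2 +
        ν * k * ‖Em ω‖ ^ 2 + ⟪ρ ω, W ω⟫) P := i3.add iρW
    have i5 : Integrable (fun ω => (1/2) * ‖Em ω‖ ^ 2 + (1/2) * ‖W ω‖ ^ 2 +
        ν * k * ‖Em ω‖ ^ 2 + ⟪ρ ω, W ω⟫ + (1/2) * ‖ρ ω‖ ^ 2) P := i4.add (iρ.const_mul _)
    have hint : a m ≤ ∫ ω, ((1/2) * ‖Em ω‖ ^ 2 + (1/2) * ‖W ω‖ ^ 2 +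
        ν * k * ‖Em ω‖ ^ 2 + ⟪ρ ω, W ω⟫ + (1/2) * ‖ρ ω‖ ^ 2) ∂P :=
      integral_mono_ae iE i5 hpt
    have hsplit : ∫ ω, ((1/2) * ‖Em ω‖ ^ 2 + (1/2) * ‖W ω‖ ^ 2 +
        ν * k * ‖Em ω‖ ^ 2 + ⟪ρ ω, W ω⟫ + (1/2) * ‖ρ ω‖ ^ 2) ∂P =
        (1/2) * a m + (1/2) * a (m-1) + ν * k * a m +
          (∫ ω, ⟪ρ ω, W ω⟫ ∂P) + (1/2) * r m := by
      rw [integral_add i4 (iρ.const_mul _), integral_add i3 iρW,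
          integral_add i2 (iE.const_mul _), integral_add i1 (iW.const_mul _),
          integral_const_mul, integral_const_mul, integral_const_mul, integral_const_mul]
    -- the conditional expectation bound
    have hIbound : (∫ ω, ⟪ρ ω, W ω⟫ ∂P) ≤ 1/(2*k) * s m + k/2 * a (m-1) := by
      rw [hinner]
      have hptI : ∀ᵐ ω ∂P, ⟪(P[ρ|𝓕 (m-1)]) ω, W ω⟫ ≤
          1/(2*k) * ‖(P[ρ|𝓕 (m-1)]) ω‖ ^ 2 + k/2 * ‖W ω‖ ^ 2 := by
        refine Filter.Eventually.of_forall fun ω => ?_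
        have h4 := real_inner_le_norm ((P[ρ|𝓕 (m-1)]) ω) (W ω)
        have h5 : ‖(P[ρ|𝓕 (m-1)]) ω‖ * ‖W ω‖ ≤
            1/(2*k) * ‖(P[ρ|𝓕 (m-1)]) ω‖ ^ 2 + k/2 * ‖W ω‖ ^ 2 := by
          rw [← sub_nonneg]
          have heq : 1/(2*k) * ‖(P[ρ|𝓕 (m-1)]) ω‖ ^ 2 + k/2 * ‖W ω‖ ^ 2 -
              ‖(P[ρ|𝓕 (m-1)]) ω‖ * ‖W ω‖ =
              (‖(P[ρ|𝓕 (m-1)]) ω‖ - k * ‖W ω‖) ^ 2 / (2*k) := by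
            field_simp
            ring
          rw [heq]
          positivity
        linarith
      calc (∫ ω, ⟪(P[ρ|𝓕 (m-1)]) ω, W ω⟫ ∂P) ≤
          ∫ ω, (1/(2*k) * ‖(P[ρ|𝓕 (m-1)]) ω‖ ^ 2 + k/2 * ‖W ω‖ ^ 2) ∂P := by
            refine integral_mono_ae icρW ((icρ.const_mul _).add (iW.const_mul _)) hptI
        _ = 1/(2*k) * s m + k/2 * a (m-1) := by
            rw [integral_add ((icρ.const_mul (1/(2*k))) :
                Integrable (fun ω => 1/(2*k) * ‖(P[ρ|𝓕 (m-1)]) ω‖ ^ 2) P)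
              (iW.const_mul (k/2)), integral_const_mul, integral_const_mul]
    -- combine scalars
    have Hmain : a m ≤ (1/2) * a m + (1/2) * a (m-1) + ν * k * a m +
        (1/(2*k) * s m + k/2 * a (m-1)) + (1/2) * r m := by
      calc a m ≤ _ := hint
        _ = _ := hsplit
        _ ≤ _ := by linarith [hIbound]
    have hq : (0:ℝ) < 2/k := by positivity
    have hqs : 1/(2*k) * s m = (1/4) * (2/k * s m) := by
      field_simp
      ring
    have hpos : (0:ℝ) < 1 - 2*ν*k := by nlinarith
    have hexp : (4*ν+2)*k + 1 ≤ c := Real.add_one_le_exp _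
    have hprod : (0:ℝ) ≤ k * ((2*ν+1) * (1 - 4*(ν*k))) := by
      refine mul_nonneg hk0.le (mul_nonneg (by linarith) (by linarith))
    have hc2 : (1+k) ≤ (1 - 2*ν*k) * c := by
      have h6 : (1 - 2*ν*k) * ((4*ν+2)*k + 1) ≤ (1 - 2*ν*k) * c :=
        mul_le_mul_of_nonneg_left hexp hpos.le
      nlinarith
    have h2 : (1 - 2*ν*k) * a m ≤ (1+k) * a (m-1) + (1/2) * (2/k * s m) + r m := by
      rw [hqs] at Hmain; linarith
    have h3 : (1+k) * a (m-1) ≤ ((1 - 2*ν*k) * c) * a (m-1) :=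
      mul_le_mul_of_nonneg_right hc2 (ha_nonneg _)
    have h4 : (1/2) * (2/k * s m) ≤ (1 - 2*ν*k) * (2/k * s m) := by
      nlinarith [mul_nonneg hq.le (hs_nonneg m)]
    have h5 : r m ≤ (1 - 2*ν*k) * (2 * r m) := by nlinarith [hr_nonneg m]
    have h6 : (1 - 2*ν*k) * a m ≤ (1 - 2*ν*k) * (c * a (m-1) + (2 * r m + 2/k * s m)) := by
      nlinarith
    exact le_of_mul_le_mul_left (by linarith [h6]) hpos
  -- discrete Gronwall / induction
  have main : ∀ m, m ≤ N →
      a m ≤ c ^ m * (a 0 + ∑ j ∈ Finset.Icc 1 m, (2 * r j + 2 / k * s j)) := by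
    intro m
    induction m with
    | zero =>
      intro _
      simp
    | succ m ih =>
      intro hm
      have hstep := step (m+1) (Nat.succ_le_succ (Nat.zero_le m)) hm
      have hih := ih (le_trans (Nat.le_succ m) hm)
      have hsub : (m + 1) - 1 = m := rfl
      rw [hsub] at hstep
      have hb : 0 ≤ 2 * r (m+1) + 2/k * s (m+1) := by
        have := hr_nonneg (m+1); have := hs_nonneg (m+1); positivity
      have hS : 0 ≤ a 0 + ∑ j ∈ Finset.Icc 1 m, (2 * r j + 2 / k * s j) := by
        refine add_nonneg (ha_nonneg 0) (Finset.sum_nonneg fun j _ => ?_)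
        have := hr_nonneg j; have := hs_nonneg j; positivity
      have hcm : (1:ℝ) ≤ c ^ (m+1) := one_le_pow₀ hc1
      have hsum : ∑ j ∈ Finset.Icc 1 (m+1), (2 * r j + 2 / k * s j) =
          (∑ j ∈ Finset.Icc 1 m, (2 * r j + 2 / k * s j)) + (2 * r (m+1) + 2/k * s (m+1)) :=
        Finset.sum_Icc_succ_top (Nat.succ_le_succ (Nat.zero_le m)) _
      rw [hsum]
      calc a (m+1) ≤ c * a m + (2 * r (m+1) + 2/k * s (m+1)) := hstep
        _ ≤ c * (c ^ m * (a 0 + ∑ j ∈ Finset.Icc 1 m, (2 * r j + 2 / k * s j))) +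
            (2 * r (m+1) + 2/k * s (m+1)) := by
            have := mul_le_mul_of_nonneg_left hih hc0.le
            linarith
        _ = c ^ (m+1) * (a 0 + ∑ j ∈ Finset.Icc 1 m, (2 * r j + 2 / k * s j)) +
            (2 * r (m+1) + 2/k * s (m+1)) := by ring
        _ ≤ c ^ (m+1) * (a 0 + ∑ j ∈ Finset.Icc 1 m, (2 * r j + 2 / k * s j)) +
            c ^ (m+1) * (2 * r (m+1) + 2/k * s (m+1)) := by nlinarith
        _ = c ^ (m+1) * ((a 0 + ∑ j ∈ Finset.Icc 1 m, (2 * r j + 2 / k * s j)) +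
            (2 * r (m+1) + 2/k * s (m+1))) := by ring
        _ = _ := by ring
  -- conclude
  have hfinal := main n hnN
  have hcn : c ^ n = (Real.exp ((2 * ν + 1) * (n * k))) ^ 2 := by
    rw [hc_def, ← Real.exp_nat_mul, sq, ← Real.exp_add]
    congr 1
    ring
  have hS : 0 ≤ a 0 + ∑ j ∈ Finset.Icc 1 n, (2 * r j + 2 / k * s j) := by
    refine add_nonneg (ha_nonneg 0) (Finset.sum_nonneg fun j _ => ?_)
    have := hr_nonneg j; have := hs_nonneg j; positivity
  calc Real.sqrt (a n) ≤
      Real.sqrt ((Real.exp ((2 * ν + 1) * (n * k))) ^ 2 *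
        (a 0 + ∑ j ∈ Finset.Icc 1 n, (2 * r j + 2 / k * s j))) := by
        refine Real.sqrt_le_sqrt ?_
        rw [← hcn]
        exact hfinal
    _ = Real.exp ((2 * ν + 1) * (n * k)) *
        Real.sqrt (a 0 + ∑ j ∈ Finset.Icc 1 n, (2 * r j + 2 / k * s j)) := by
        rw [Real.sqrt_mul (sq_nonneg _), Real.sqrt_sq (Real.exp_nonneg _)]
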